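/- arXiv:1711.07237 — 4 statements merged into one kernel-verified Lean document; each statement's English description precedes it below -/
import Mathlib

section
/- Assume (N−2)_+/N < m < q < 1 and that the initial datum satisfies u₀ ≢ 0 and u₀(x) ≤ κ₀|x|^{−2/(q−m)} for all x ∈ ℝ^N, for some κ₀ > 0. Then there exists a constant c_∞ > 0 (depending on N, m, q, u₀) such that sup_{x ∈ ℝ^N} u(t,x) ≥ c_∞ (T_e − t)^{1/(1−q)} for all t ∈ (0, T_e). -/
open MeasureTheory Real Set

set_option maxHeartbeats 1000000

/-- The Laplacian of `f : ℝ^N → ℝ` at `x`, as the sum of second partial derivatives. -/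
noncomputable def lapl {N : ℕ} (f : EuclideanSpace ℝ (Fin N) → ℝ)
    (x : EuclideanSpace ℝ (Fin N)) : ℝ :=
  ∑ i : Fin N, fderiv ℝ (fun y => fderiv ℝ f y (EuclideanSpace.single i 1)) x
      (EuclideanSpace.single i 1)


lemma deriv_nonneg_of_left_max {φ : ℝ → ℝ} {t0 s d : ℝ} (hd : HasDerivAt φ d s)
    (ht : t0 < s) (hmax : ∀ r ∈ Set.Icc t0 s, φ r ≤ φ s) : 0 ≤ d := by
  have hslope := hasDerivAt_iff_tendsto_slope.mp hd
  have h2 : Filter.Tendsto (slope φ s) (nhdsWithin s (Set.Iio s)) (nhds d) :=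
    hslope.mono_left (nhdsWithin_mono _ (fun r hr => ne_of_lt hr))
  refine ge_of_tendsto h2 ?_
  filter_upwards [Ioo_mem_nhdsLT ht,
    self_mem_nhdsWithin] with r hr hr'
  have h1 : φ r - φ s ≤ 0 := sub_nonpos.mpr (hmax r ⟨le_of_lt hr.1, le_of_lt hr.2⟩)
  have h2 : r - s < 0 := sub_neg.mpr hr'
  rw [slope_def_field]
  exact div_nonneg_iff.mpr (Or.inr ⟨h1, h2.le⟩)

lemma contDiff_one_fderiv_apply {N : ℕ} {f : EuclideanSpace ℝ (Fin N) → ℝ}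
    (hf : ContDiff ℝ 2 f) (v : EuclideanSpace ℝ (Fin N)) :
    ContDiff ℝ 1 (fun y => fderiv ℝ f y v) :=
  (ContinuousLinearMap.apply ℝ ℝ v).contDiff.comp (hf.fderiv_right (by norm_num))

lemma second_deriv_nonneg_of_min {N : ℕ} {ψ : EuclideanSpace ℝ (Fin N) → ℝ}
    (hψ : ContDiff ℝ 2 ψ) {x : EuclideanSpace ℝ (Fin N)}
    (hmin : ∀ y, ψ x ≤ ψ y) (v : EuclideanSpace ℝ (Fin N)) :
    0 ≤ fderiv ℝ (fun y => fderiv ℝ ψ y v) x v := by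
  have hψd : Differentiable ℝ ψ := hψ.differentiable (by norm_num)
  have hF : ContDiff ℝ 1 (fun y => fderiv ℝ ψ y v) := contDiff_one_fderiv_apply hψ v
  set L : ℝ → EuclideanSpace ℝ (Fin N) := fun r => x + r • v with hLdef
  have hL : ∀ r, HasDerivAt L v r := by
    intro r
    have := ((hasDerivAt_id r).smul_const v).const_add x
    simp only [one_smul] at this; exact this
  have hL0 : L 0 = x := by simp [hLdef]
  set γ : ℝ → ℝ := fun r => ψ (L r) with hγdef
  have hγ : ∀ r, HasDerivAt γ (fderiv ℝ ψ (L r) v) r := fun r =>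
    (hψd (L r)).hasFDerivAt.comp_hasDerivAt r (hL r)
  set G : ℝ → ℝ := fun r => fderiv ℝ ψ (L r) v with hGdef
  have hG : HasDerivAt G (fderiv ℝ (fun y => fderiv ℝ ψ y v) x v) 0 := by
    have h := ((hF.differentiable one_ne_zero) (L 0)).hasFDerivAt.comp_hasDerivAt
      (0 : ℝ) (hL 0)
    rw [hL0] at h
    exact h
  have hlocmin : IsLocalMin γ 0 := by
    apply Filter.Eventually.of_forall
    intro r
    simp only [hγdef, hL0]
    exact hmin (L r)
  have hG0 : G 0 = 0 := by
    have := hlocmin.hasDerivAt_eq_zero (by rw [← hL0] at *; exact hγ 0)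
    simpa [hGdef, hL0] using this
  by_contra hcon
  push_neg at hcon
  have hslope := hasDerivAt_iff_tendsto_slope.mp hG
  have h3 : Filter.Tendsto (slope G 0) (nhdsWithin 0 (Set.Ioi 0)) (nhds _) :=
    hslope.mono_left (nhdsWithin_mono _ (fun r hr => ne_of_gt hr))
  have hev : ∀ᶠ r in nhdsWithin 0 (Set.Ioi 0), G r < 0 := by
    filter_upwards [h3.eventually (eventually_lt_nhds hcon), self_mem_nhdsWithin]
      with r h1 h2
    rw [slope_def_field, hG0, sub_zero, sub_zero] at h1
    by_contra hge
    push_neg at hge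
    exact absurd (div_nonneg hge h2.le) (not_le.mpr h1)
  obtain ⟨b, hb, hsub⟩ := mem_nhdsGT_iff_exists_Ioo_subset.mp hev
  have hbpos : (0:ℝ) < b := hb
  have hanti : StrictAntiOn γ (Set.Icc 0 (b/2)) := by
    apply strictAntiOn_of_deriv_neg (convex_Icc _ _)
    · exact (hψ.continuous.comp (by continuity)).continuousOn
    · intro r hr
      rw [interior_Icc] at hr
      rw [(hγ r).deriv]
      exact hsub ⟨hr.1, lt_of_lt_of_le hr.2 (by linarith)⟩
  have hlt : γ (b/2) < γ 0 :=
    hanti (Set.left_mem_Icc.mpr (by linarith)) ⟨by linarith, le_refl _⟩ (by linarith)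
  have : γ 0 ≤ γ (b/2) := by
    simp only [hγdef, hL0]; exact hmin _
  linarith

lemma lapl_le_of_touch {N : ℕ} {f g : EuclideanSpace ℝ (Fin N) → ℝ}
    (hf : ContDiff ℝ 2 f) (hg : ContDiff ℝ 2 g) {x : EuclideanSpace ℝ (Fin N)}
    (hle : ∀ y, f y ≤ g y) (heq : f x = g x) : lapl f x ≤ lapl g x := by
  have hψ : ContDiff ℝ 2 (fun y => g y - f y) := hg.sub hf
  have hmin : ∀ y, (fun y => g y - f y) x ≤ (fun y => g y - f y) y := by
    intro y; simp only; rw [heq]; simp [sub_nonneg, hle y]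
  unfold lapl
  rw [← sub_nonneg, ← Finset.sum_sub_distrib]
  apply Finset.sum_nonneg; intro i _
  set v := EuclideanSpace.single i (1:ℝ) with hv
  have key := second_deriv_nonneg_of_min hψ hmin v
  have h1 : (fun y => fderiv ℝ (fun z => g z - f z) y v)
      = fun y => fderiv ℝ g y v - fderiv ℝ f y v := by
    funext y
    rw [fderiv_fun_sub ((hg.differentiable (by norm_num)) y) ((hf.differentiable (by norm_num)) y)]
    rfl
  rw [h1] at key
  have h2 : fderiv ℝ (fun y => fderiv ℝ g y v - fderiv ℝ f y v) x =
      fderiv ℝ (fun y => fderiv ℝ g y v) x - fderiv ℝ (fun y => fderiv ℝ f y v) x :=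
    fderiv_sub ((contDiff_one_fderiv_apply hg v).differentiable one_ne_zero x)
      ((contDiff_one_fderiv_apply hf v).differentiable one_ne_zero x)
  rw [h2] at key
  simpa [sub_nonneg] using key

section
variable {N : ℕ}

lemma hasFDerivAt_base {A c : ℝ} (y : EuclideanSpace ℝ (Fin N)) :
    HasFDerivAt (fun z : EuclideanSpace ℝ (Fin N) => A + c * ‖z‖ ^ 2)
      (((2:ℝ) * c) • (innerSL ℝ y)) y := by
  have h1 := (hasStrictFDerivAt_norm_sq y).hasFDerivAt
  have h2 := (h1.const_mul c).const_add A
  refine h2.congr_fderiv ?_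
  ext z
  simp [two_smul]
  ring

lemma hasFDerivAt_powbase {A c p : ℝ} (hA : 0 < A) (hc : 0 ≤ c)
    (y : EuclideanSpace ℝ (Fin N)) :
    HasFDerivAt (fun z : EuclideanSpace ℝ (Fin N) => (A + c * ‖z‖ ^ 2) ^ p)
      ((p * (A + c * ‖y‖ ^ 2) ^ (p - 1)) • (((2:ℝ) * c) • (innerSL ℝ y))) y := by
  have hbase : 0 < A + c * ‖y‖ ^ 2 := by positivity
  have hout := Real.hasDerivAt_rpow_const (p := p) (Or.inl hbase.ne')
  exact hout.comp_hasFDerivAt y (hasFDerivAt_base y)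

lemma fderiv_powbase_apply {A c p : ℝ} (hA : 0 < A) (hc : 0 ≤ c)
    (y : EuclideanSpace ℝ (Fin N)) (i : Fin N) :
    fderiv ℝ (fun z : EuclideanSpace ℝ (Fin N) => (A + c * ‖z‖ ^ 2) ^ p) y
      (EuclideanSpace.single i 1)
      = 2 * p * c * ((A + c * ‖y‖ ^ 2) ^ (p - 1) * y i) := by
  rw [(hasFDerivAt_powbase hA hc y).fderiv]
  simp only [ContinuousLinearMap.smul_apply, innerSL_apply_apply,
    EuclideanSpace.inner_single_right, smul_eq_mul]
  simp only [starRingEnd_apply, star_trivial]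
  ring

lemma lapl_pow_bound {A c mm : ℝ} (hA : 0 < A) (hc : 0 < c)
    (hm0 : 0 < mm) (hm1 : mm < 1) (x : EuclideanSpace ℝ (Fin N)) :
    lapl (fun y : EuclideanSpace ℝ (Fin N) => (A + c * ‖y‖ ^ 2) ^ mm) x
      ≤ 2 * N * mm * c * A ^ (mm - 1) := by
  have hbx : 0 < A + c * ‖x‖ ^ 2 := by positivity
  set B := A + c * ‖x‖ ^ 2 with hB
  have key : ∀ i : Fin N,
      fderiv ℝ (fun y => fderiv ℝ
          (fun z : EuclideanSpace ℝ (Fin N) => (A + c * ‖z‖ ^ 2) ^ mm) y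
          (EuclideanSpace.single i 1)) x (EuclideanSpace.single i 1)
      = 2 * mm * c * (B ^ (mm - 1)
          + (mm - 1) * B ^ (mm - 2) * (c * (2 * (x i) ^ 2))) := by
    intro i
    have hfun : (fun y => fderiv ℝ
          (fun z : EuclideanSpace ℝ (Fin N) => (A + c * ‖z‖ ^ 2) ^ mm) y
          (EuclideanSpace.single i 1))
        = fun y => (2 * mm * c) *
            ((A + c * ‖y‖ ^ 2) ^ (mm - 1) * y i) := by
      funext y; exact fderiv_powbase_apply hA hc.le y i
    rw [hfun]
    -- derivative of the product
    have hH := hasFDerivAt_powbase (p := mm - 1) hA hc.le x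
    have hP : HasFDerivAt (fun z : EuclideanSpace ℝ (Fin N) => z i)
        (EuclideanSpace.proj (𝕜 := ℝ) i) x := (EuclideanSpace.proj (𝕜 := ℝ) i).hasFDerivAt
    have hmul : HasFDerivAt (fun y : EuclideanSpace ℝ (Fin N) =>
        2 * mm * c * ((A + c * ‖y‖ ^ 2) ^ (mm - 1) * y i)) _ x :=
      (hH.mul hP).const_mul (2 * mm * c)
    rw [hmul.fderiv]
    simp only [ContinuousLinearMap.smul_apply, ContinuousLinearMap.add_apply,
      innerSL_apply_apply, EuclideanSpace.inner_single_right, smul_eq_mul,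
      PiLp.proj_apply, EuclideanSpace.single_apply]
    simp only [starRingEnd_apply, star_trivial, if_true]
    have : mm - 1 - 1 = mm - 2 := by ring
    rw [this]
    ring
  unfold lapl
  have hsum : ∀ i : Fin N,
      fderiv ℝ (fun y => fderiv ℝ
          (fun z : EuclideanSpace ℝ (Fin N) => (A + c * ‖z‖ ^ 2) ^ mm) y
          (EuclideanSpace.single i 1)) x (EuclideanSpace.single i 1)
      ≤ 2 * mm * c * A ^ (mm - 1) := by
    intro i
    rw [key i]
    have h1 : B ^ (mm - 1) ≤ A ^ (mm - 1) :=
      Real.rpow_le_rpow_of_nonpos hA (by rw [hB]; nlinarith [sq_nonneg ‖x‖]) (by linarith)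
    have h2 : (mm - 1) * B ^ (mm - 2) * (c * (2 * (x i) ^ 2)) ≤ 0 := by
      have hBp : (0:ℝ) < B ^ (mm - 2) := Real.rpow_pos_of_pos hbx _
      have h0 : (0:ℝ) ≤ c * (2 * (x i)^2) := by positivity
      nlinarith [mul_nonneg hBp.le h0]
    have h3 : (0:ℝ) ≤ 2 * mm * c := by positivity
    nlinarith
  calc ∑ i : Fin N, fderiv ℝ (fun y => fderiv ℝ
          (fun z : EuclideanSpace ℝ (Fin N) => (A + c * ‖z‖ ^ 2) ^ mm) y
          (EuclideanSpace.single i 1)) x (EuclideanSpace.single i 1)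
      ≤ ∑ _i : Fin N, 2 * mm * c * A ^ (mm - 1) :=
        Finset.sum_le_sum (fun i _ => hsum i)
    _ = 2 * N * mm * c * A ^ (mm - 1) := by
        rw [Finset.sum_const, Finset.card_univ, Fintype.card_fin]
        simp [nsmul_eq_mul]; ring
end

lemma contDiff_powbase {N : ℕ} {A c p : ℝ} (hA : 0 < A) (hc : 0 ≤ c) :
    ContDiff ℝ 2 (fun y : EuclideanSpace ℝ (Fin N) => (A + c * ‖y‖ ^ 2) ^ p) := by
  rw [contDiff_iff_contDiffAt]
  intro y
  have hb : (0:ℝ) < A + c * ‖y‖ ^ 2 := by positivity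
  have hinner : ContDiffAt ℝ 2 (fun y : EuclideanSpace ℝ (Fin N) => A + c * ‖y‖ ^ 2) y :=
    contDiffAt_const.add (contDiffAt_const.mul (contDiff_norm_sq ℝ).contDiffAt)
  exact (Real.contDiffAt_rpow_const_of_ne hb.ne').comp y hinner

/-- L^∞-lower bound near the extinction time, with some constant. -/
theorem stmt5 {N : ℕ} (hN : 1 ≤ N) {m q : ℝ}
    (hm : max ((N : ℝ) - 2) 0 / N < m) (hmq : m < q) (hq : q < 1)
(u : ℝ → EuclideanSpace ℝ (Fin N) → ℝ)
    (hu_cont : ContinuousOn (fun p : ℝ × EuclideanSpace ℝ (Fin N) => u p.1 p.2)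
      (Set.Ici 0 ×ˢ Set.univ))
    (hu_nonneg : ∀ t x, 0 ≤ u t x)
    (hu_bdd : ∃ M : ℝ, ∀ t x, u t x ≤ M)
    (hu_t : ∀ x, ContDiffOn ℝ 1 (fun τ => u τ x) (Set.Ioi 0))
    (hu_xm : ∀ t, 0 < t → ContDiff ℝ 2 (fun x => u t x ^ m))
    (hPDE : ∀ t, 0 < t → ∀ x,
      deriv (fun τ => u τ x) t = lapl (fun y => u t y ^ m) x - u t x ^ q)
(Te : ℝ) (hTe_pos : 0 < Te)
    (hTe_lt : ∀ t, 0 ≤ t → t < Te → ∃ x, u t x ≠ 0)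
    (hTe_ge : ∀ t, Te ≤ t → ∀ x, u t x = 0)
(hu0_ne : ∃ x, u 0 x ≠ 0)
    (κ₀ : ℝ) (hκ₀ : 0 < κ₀)
    (hdecay : ∀ x : EuclideanSpace ℝ (Fin N), x ≠ 0 →
      u 0 x ≤ κ₀ * ‖x‖ ^ (-2 / (q - m))) :
    ∃ c : ℝ, 0 < c ∧ ∀ t, 0 < t → t < Te →
      c * (Te - t) ^ (1 / (1 - q)) ≤ ⨆ x, u t x := by
  obtain ⟨M, hM⟩ := hu_bdd
  have hm0 : 0 < m := lt_of_le_of_lt (div_nonneg (le_max_right _ _) (Nat.cast_nonneg N)) hm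
  have hq0 : 0 < q := hm0.trans hmq
  have h1q : 0 < 1 - q := by linarith
  have hm1 : m < 1 := hmq.trans hq
  have hMnn : 0 ≤ M := le_trans (hu_nonneg 0 0) (hM 0 0)
  have hαpos : 0 < 1/(1-q) := by positivity
  have key : ∀ t0, 0 < t0 → t0 < Te → ((1-q)*(Te - t0)) ^ (1/(1-q)) ≤ ⨆ x, u t0 x := by
    intro t0 ht0 ht0Te
    by_contra hcon
    push_neg at hcon
    set a := ⨆ x, u t0 x with ha
    have hbdd : BddAbove (Set.range (u t0)) := ⟨M, by rintro _ ⟨x, rfl⟩; exact hM t0 x⟩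
    have hle_a : ∀ x, u t0 x ≤ a := fun x => le_ciSup hbdd x
    have ha0 : 0 ≤ a := le_trans (hu_nonneg t0 0) (hle_a 0)
    set R := (1-q)*(Te - t0) with hR
    have hRpos : 0 < R := mul_pos h1q (by linarith)
    have haq : a ^ (1-q) < R := by
      have h1 : a ^ (1-q) < (R ^ (1/(1-q))) ^ (1-q) := Real.rpow_lt_rpow ha0 hcon h1q
      rwa [← Real.rpow_mul hRpos.le, one_div_mul_cancel (ne_of_gt h1q), Real.rpow_one] at h1
    set b := (a ^ (1-q) + R)/2 with hb
    have hb1 : a ^ (1-q) < b := by rw [hb]; linarith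
    have hb2 : b < R := by rw [hb]; linarith
    have hbpos : 0 < b := lt_of_le_of_lt (Real.rpow_nonneg ha0 _) hb1
    set T1 := t0 + b / (1-q) with hT1
    have hT1t0 : t0 < T1 := by rw [hT1]; have : 0 < b/(1-q) := by positivity
                               linarith
    have hT1Te : T1 < Te := by
      rw [hT1]
      have : b / (1-q) < Te - t0 := by
        rw [div_lt_iff₀ h1q]
        rw [hR] at hb2; linarith [hb2]
      linarith
    set w : ℝ → ℝ := fun s => ((1-q)*(T1 - s)) ^ (1/(1-q)) with hw
    have hbase_pos : ∀ s, s < T1 → 0 < (1-q)*(T1 - s) := fun s hs => mul_pos h1q (by linarith)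
    have hw_pos : ∀ s, s < T1 → 0 < w s := fun s hs => Real.rpow_pos_of_pos (hbase_pos s hs) _
    have hw_nonneg : ∀ s, s ≤ T1 → 0 ≤ w s := fun s h =>
      Real.rpow_nonneg (mul_nonneg h1q.le (by linarith)) _
    have hw_anti : ∀ s1 s2, s1 ≤ s2 → s2 ≤ T1 → w s2 ≤ w s1 := by
      intro s1 s2 h12 h2
      exact Real.rpow_le_rpow (mul_nonneg h1q.le (by linarith))
        (mul_le_mul_of_nonneg_left (by linarith) h1q.le) hαpos.le
    have hwt0 : a < w t0 := by
      have hbb : (1-q)*(T1 - t0) = b := by rw [hT1]; field_simp; ring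
      have h2 : a = (a ^ (1-q)) ^ (1/(1-q)) := by
        rw [← Real.rpow_mul ha0, mul_one_div_cancel (ne_of_gt h1q), Real.rpow_one]
      rw [hw]; simp only [hbb]
      calc a = (a ^ (1-q)) ^ (1/(1-q)) := h2
        _ < b ^ (1/(1-q)) := Real.rpow_lt_rpow (Real.rpow_nonneg ha0 _) hb1 hαpos
    have hw_deriv : ∀ s, s < T1 → HasDerivAt w (-(w s ^ q)) s := by
      intro s hs
      have hbp := hbase_pos s hs
      have hinner : HasDerivAt (fun s => (1-q)*(T1 - s)) (-(1-q)) s := by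
        have h1 : HasDerivAt (fun s : ℝ => T1 - s) (-1) s := (hasDerivAt_id s).const_sub T1
        have h2 := h1.const_mul (1-q)
        simpa using h2
      have hout := Real.hasDerivAt_rpow_const (p := 1/(1-q)) (Or.inl hbp.ne')
      have hcomp := hout.comp s hinner
      have hval : 1/(1-q) * ((1-q)*(T1-s)) ^ (1/(1-q) - 1) * (-(1-q)) = -(w s ^ q) := by
        have h3 : w s ^ q = ((1-q)*(T1-s)) ^ ((1/(1-q)) * q) := by
          rw [hw]; simp only; rw [← Real.rpow_mul hbp.le]
        have h4 : (1/(1-q)) * q = 1/(1-q) - 1 := by field_simp; ring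
        rw [h3, h4]
        field_simp
      rw [hval] at hcomp
      exact hcomp
    -- comparison lemma
    have comp : ∀ T', t0 < T' → T' < T1 → ∀ σ, 0 < σ → ∀ s, s ∈ Set.Icc t0 T' → ∀ x,
        u s x ≤ w s + σ * Real.exp ((2*N*m*(w T')^(m-1) + 1) * (s - t0)) * (1 + ‖x‖^2) := by
      intro T' hT't0 hT'T1 σ hσ
      by_contra hcon2
      push_neg at hcon2
      obtain ⟨s1, hs1, x1, hx1⟩ := hcon2
      set K := 2*N*m*(w T')^(m-1) + 1 with hK
      have hKrnn : 0 ≤ 2*N*m*(w T')^(m-1) := by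
        have := Real.rpow_nonneg (hw_pos T' hT'T1).le (m-1)
        positivity
      have hKpos : 0 < K := by rw [hK]; linarith
      set θ : ℝ × EuclideanSpace ℝ (Fin N) → ℝ :=
        fun p => u p.1 p.2 - (w p.1 + σ * Real.exp (K * (p.1 - t0)) * (1 + ‖p.2‖^2)) with hθ
      have hexp1 : ∀ s, t0 ≤ s → 1 ≤ Real.exp (K*(s-t0)) := fun s hs =>
        Real.one_le_exp (mul_nonneg hKpos.le (by linarith))
      have hRad : ∀ s x, s ∈ Set.Icc t0 T' → 0 ≤ θ (s, x) → ‖x‖ ≤ Real.sqrt (M/σ) := by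
        intro s x hs hpos
        rw [hθ] at hpos; simp only at hpos
        have h5 : σ * (1 + ‖x‖^2) ≤ M := by
          have e1 : 1 ≤ Real.exp (K*(s-t0)) := hexp1 s hs.1
          have e2 : (0:ℝ) ≤ 1 + ‖x‖^2 := by positivity
          have e3 : σ * 1 * (1+‖x‖^2) ≤ σ * Real.exp (K*(s-t0)) * (1+‖x‖^2) :=
            mul_le_mul_of_nonneg_right (mul_le_mul_of_nonneg_left e1 hσ.le) e2
          simp only [mul_one] at e3
          linarith [hw_nonneg s (le_trans hs.2 hT'T1.le), hM s x, e3]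
        have h6 : ‖x‖^2 ≤ M/σ := by
          rw [le_div_iff₀ hσ]
          have h7 : σ*(1+‖x‖^2) = σ + ‖x‖^2*σ := by ring
          linarith
        calc ‖x‖ = Real.sqrt (‖x‖^2) := (Real.sqrt_sq (norm_nonneg x)).symm
          _ ≤ Real.sqrt (M/σ) := Real.sqrt_le_sqrt h6
      set R2 := Real.sqrt (M/σ) with hR2
      set Kc : Set (ℝ × EuclideanSpace ℝ (Fin N)) :=
        Set.Icc t0 T' ×ˢ Metric.closedBall 0 R2 with hKc
      have hKcomp : IsCompact Kc := isCompact_Icc.prod (isCompact_closedBall _ _)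
      have hwcont : ∀ s, s < T1 → ContinuousAt w s := by
        intro s hs
        have hbc : ContinuousAt (fun s : ℝ => (1-q)*(T1 - s)) s := by fun_prop
        exact ContinuousAt.rpow_const hbc (Or.inl (hbase_pos s hs).ne')
      have hθca : ∀ p : ℝ × EuclideanSpace ℝ (Fin N), 0 < p.1 → p.1 < T1 →
          ContinuousAt θ p := by
        intro p hp1 hp2
        have h1 : ContinuousAt (fun p : ℝ × EuclideanSpace ℝ (Fin N) => u p.1 p.2) p :=
          hu_cont.continuousAt (prod_mem_nhds (Ici_mem_nhds hp1) Filter.univ_mem)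
        have h2 : ContinuousAt (fun p : ℝ × EuclideanSpace ℝ (Fin N) => w p.1) p :=
          (hwcont p.1 hp2).comp continuousAt_fst
        have h3 : Continuous (fun p : ℝ × EuclideanSpace ℝ (Fin N) =>
            σ * Real.exp (K * (p.1 - t0)) * (1 + ‖p.2‖^2)) := by fun_prop
        exact h1.sub (h2.add h3.continuousAt)
      have hθcont : ContinuousOn θ Kc := by
        intro p hp
        rw [hKc] at hp
        have hp1 : 0 < p.1 := lt_of_lt_of_le ht0 hp.1.1
        have hp2 : p.1 < T1 := lt_of_le_of_lt hp.1.2 hT'T1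
        exact (hθca p hp1 hp2).continuousWithinAt
      set F := Kc ∩ θ ⁻¹' (Set.Ici 0) with hF
      have hFclosed : IsClosed F :=
        hθcont.preimage_isClosed_of_isClosed hKcomp.isClosed isClosed_Ici
      have hFcomp : IsCompact F := hKcomp.of_isClosed_subset hFclosed Set.inter_subset_left
      have hp1F : (s1, x1) ∈ F := by
        have hθ1 : 0 ≤ θ (s1, x1) := by rw [hθ]; simp only; linarith
        refine ⟨⟨hs1, ?_⟩, hθ1⟩
        rw [mem_closedBall_zero_iff]
        exact hRad s1 x1 hs1 hθ1
      obtain ⟨p', hp'F, hp'min⟩ := hFcomp.exists_isMinOn ⟨(s1,x1), hp1F⟩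
        continuous_fst.continuousOn
      obtain ⟨⟨hs'mem, hx'ball⟩, hθp'⟩ := hp'F
      set s' := p'.1 with hs'
      set x' := p'.2 with hx'
      have hmin' : ∀ p ∈ F, s' ≤ p.1 := fun p hp => hp'min hp
      have hnegt0 : ∀ y, θ (t0, y) < 0 := by
        intro y
        rw [hθ]; simp only
        have h1 : u t0 y ≤ a := hle_a y
        have h3 : 0 < σ * Real.exp (K*(t0-t0)) * (1+‖y‖^2) := by positivity
        linarith [hwt0]
      have hpeq : p' = (s', x') := by rw [hs', hx']
      have hθge : 0 ≤ θ (s', x') := by rw [← hpeq]; exact hθp'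
      have hs'gt : t0 < s' := by
        rcases eq_or_lt_of_le hs'mem.1 with h | h
        · exfalso
          have h2 := hnegt0 x'
          rw [h] at h2
          linarith [hθge, h2]
        · exact h
      have hs'T1 : s' < T1 := lt_of_le_of_lt hs'mem.2 hT'T1
      have hs'pos : 0 < s' := lt_trans ht0 hs'gt
      -- no positive value at time s' :
      have hspace : ∀ y, θ (s', y) ≤ 0 := by
        intro y
        by_contra hy
        push_neg at hy
        have hmk : ContinuousAt (fun s : ℝ => ((s, y) : ℝ × EuclideanSpace ℝ (Fin N))) s' :=
          (continuous_id.prodMk continuous_const).continuousAt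
        have hca : ContinuousAt (fun s => θ (s, y)) s' :=
          ContinuousAt.comp (f := fun s : ℝ => ((s, y) : ℝ × EuclideanSpace ℝ (Fin N)))
            (hθca (s', y) hs'pos hs'T1) hmk
        have hev : ∀ᶠ s in nhds s', 0 < θ (s, y) := hca.eventually_const_lt hy
        have hev' : ∀ᶠ s in nhdsWithin s' (Set.Iio s'), 0 < θ (s, y) :=
          hev.filter_mono nhdsWithin_le_nhds
        have hev2 : ∀ᶠ s in nhdsWithin s' (Set.Iio s'), s ∈ Set.Ioo t0 s' :=
          Ioo_mem_nhdsLT hs'gt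
        obtain ⟨s2, hθs2, hs2⟩ := (hev'.and hev2).exists
        have hs2F : (s2, y) ∈ F := by
          refine ⟨⟨⟨hs2.1.le, le_trans hs2.2.le hs'mem.2⟩, ?_⟩, hθs2.le⟩
          rw [mem_closedBall_zero_iff]
          exact hRad s2 y ⟨hs2.1.le, le_trans hs2.2.le hs'mem.2⟩ hθs2.le
        exact absurd (hmin' _ hs2F) (not_le.mpr hs2.2)
      have hθ0 : θ (s', x') = 0 := le_antisymm (hspace x') hθge
      -- unfold the contact information
      have hsp : ∀ y, u s' y ≤ w s' + σ * Real.exp (K*(s'-t0)) * (1+‖y‖^2) := by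
        intro y
        have h := hspace y
        rw [hθ] at h
        simp only at h
        linarith
      have heqc : u s' x' = w s' + σ * Real.exp (K*(s'-t0)) * (1+‖x'‖^2) := by
        rw [hθ] at hθ0
        simp only at hθ0
        linarith
      set c2 := σ * Real.exp (K*(s'-t0)) with hc2
      have hc2pos : 0 < c2 := by rw [hc2]; positivity
      have hc1pos : 0 < w s' := hw_pos s' hs'T1
      have hle_uy : ∀ y, u s' y ≤ (w s' + c2) + c2 * ‖y‖^2 := by
        intro y
        have h := hsp y
        have hr : w s' + c2 * (1+‖y‖^2) = (w s' + c2) + c2 * ‖y‖^2 := by ring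
        linarith [h, hr.le]
      have heq_u : u s' x' = (w s' + c2) + c2 * ‖x'‖^2 := by
        rw [heqc]; ring
      have hfle : ∀ y, u s' y ^ m ≤ ((w s' + c2) + c2 * ‖y‖^2) ^ m := fun y =>
        Real.rpow_le_rpow (hu_nonneg s' y) (hle_uy y) hm0.le
      have hfeq : u s' x' ^ m = ((w s' + c2) + c2 * ‖x'‖^2) ^ m := by rw [heq_u]
      have hApos : 0 < w s' + c2 := by linarith
      have hlapl1 : lapl (fun y => u s' y ^ m) x' ≤
          lapl (fun y => ((w s' + c2) + c2 * ‖y‖^2) ^ m) x' :=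
        lapl_le_of_touch (hu_xm s' hs'pos) (contDiff_powbase hApos hc2pos.le) hfle hfeq
      have hlapl2 : lapl (fun y => ((w s' + c2) + c2 * ‖y‖^2) ^ m) x'
          ≤ 2*N*m*c2*(w s' + c2)^(m-1) := lapl_pow_bound hApos hc2pos hm0 hm1 x'
      have hpow1 : (w s' + c2)^(m-1) ≤ (w s')^(m-1) :=
        Real.rpow_le_rpow_of_nonpos hc1pos (by linarith) (by linarith)
      have hpow2 : (w s')^(m-1) ≤ (w T')^(m-1) :=
        Real.rpow_le_rpow_of_nonpos (hw_pos T' hT'T1) (hw_anti s' T' hs'mem.2 hT'T1.le)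
          (by linarith)
      have hlapl3 : lapl (fun y => u s' y ^ m) x' ≤ (K - 1) * c2 := by
        have hnn : (0:ℝ) ≤ 2*N*m*c2 := by positivity
        have h2 : 2*N*m*c2*(w s' + c2)^(m-1) ≤ 2*N*m*c2*(w T')^(m-1) :=
          mul_le_mul_of_nonneg_left (le_trans hpow1 hpow2) hnn
        have h3 : (K-1)*c2 = 2*N*m*(w T')^(m-1)*c2 := by rw [hK]; ring
        rw [h3]
        calc lapl (fun y => u s' y ^ m) x' ≤ _ := hlapl1
          _ ≤ _ := hlapl2
          _ ≤ 2*N*m*c2*(w T')^(m-1) := h2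
          _ = 2*N*m*(w T')^(m-1)*c2 := by ring
      -- time derivative at the contact point
      have hdiffu : HasDerivAt (fun τ => u τ x') (deriv (fun τ => u τ x') s') s' :=
        (((hu_t x').contDiffAt (Ioi_mem_nhds hs'pos)).differentiableAt one_ne_zero).hasDerivAt
      have hdw := hw_deriv s' hs'T1
      have hinner2 : HasDerivAt (fun s => K * (s - t0)) K s' := by
        have h := ((hasDerivAt_id s').sub_const t0).const_mul K
        simpa using h
      have hdexp : HasDerivAt (fun s => σ * Real.exp (K*(s-t0)) * (1+‖x'‖^2))
          (σ * (Real.exp (K*(s'-t0)) * K) * (1+‖x'‖^2)) s' := by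
        have h1 := hinner2.exp
        have h2 := (h1.const_mul σ).mul_const (1+‖x'‖^2)
        exact h2
      have hφ : HasDerivAt (fun s => θ (s, x'))
          (deriv (fun τ => u τ x') s'
            - (-(w s' ^ q) + σ * (Real.exp (K*(s'-t0)) * K) * (1+‖x'‖^2))) s' := by
        rw [hθ]
        simp only
        exact hdiffu.sub (hdw.add hdexp)
      have hφmax : ∀ r ∈ Set.Icc t0 s', (fun s => θ (s, x')) r ≤ (fun s => θ (s, x')) s' := by
        intro r hr
        simp only
        rw [hθ0]
        rcases eq_or_lt_of_le hr.2 with h | h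
        · rw [h, hθ0]
        · by_contra hpos2
          push_neg at hpos2
          have hrmem : r ∈ Set.Icc t0 T' := ⟨hr.1, le_trans h.le hs'mem.2⟩
          have hrF : (r, x') ∈ F := by
            refine ⟨⟨hrmem, ?_⟩, hpos2.le⟩
            rw [mem_closedBall_zero_iff]
            exact hRad r x' hrmem hpos2.le
          exact absurd (hmin' _ hrF) (not_le.mpr h)
      have hdge := deriv_nonneg_of_left_max hφ hs'gt hφmax
      have hPDEs := hPDE s' hs'pos x'
      have huq : (w s') ^ q ≤ (u s' x') ^ q := by
        apply Real.rpow_le_rpow hc1pos.le ?_ hq0.le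
        rw [heq_u]
        have h8 : (0:ℝ) ≤ c2 * ‖x'‖^2 := by positivity
        linarith
      have hKc2 : K * c2 ≤ σ * (Real.exp (K*(s'-t0)) * K) * (1+‖x'‖^2) := by
        rw [hc2]
        have h1 : σ * (Real.exp (K*(s'-t0)) * K) * (1+‖x'‖^2)
            - K * (σ * Real.exp (K*(s'-t0))) = σ * Real.exp (K*(s'-t0)) * K * ‖x'‖^2 := by
          ring
        have h2 : (0:ℝ) ≤ σ * Real.exp (K*(s'-t0)) * K * ‖x'‖^2 := by positivity
        linarith
      rw [hPDEs] at hdge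
      linarith [hlapl3, huq, hKc2, hc2pos, hdge]
    -- let σ → 0 and conclude u ≤ w up to time T1
    have step1 : ∀ s, t0 ≤ s → s < T1 → ∀ x, u s x ≤ w s := by
      intro s hs1 hs2 x
      rcases eq_or_lt_of_le hs1 with heq | hlt
      · rw [← heq]
        exact le_trans (hle_a x) hwt0.le
      · obtain ⟨T', hT'⟩ : ∃ z : ℝ, z = (s + T1)/2 := ⟨_, rfl⟩
        have hT'1 : t0 < T' := by clear_value T1; rw [hT']; linarith
        have hT'2 : T' < T1 := by clear_value T1; rw [hT']; linarith
        have hsT' : s ≤ T' := by clear_value T1; rw [hT']; linarith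
        by_contra hccc
        push_neg at hccc
        have hE' : Real.exp ((2*N*m*(w T')^(m-1) + 1) * (s - t0)) ≠ 0 :=
          (Real.exp_pos _).ne'
        have hx2 : (0:ℝ) < 1 + ‖x‖^2 := by positivity
        have hEpos : 0 < Real.exp ((2*N*m*(w T')^(m-1) + 1) * (s - t0)) * (1 + ‖x‖^2) := by
          positivity
        set σ0 := (u s x - w s) /
          (2 * (Real.exp ((2*N*m*(w T')^(m-1) + 1) * (s - t0)) * (1 + ‖x‖^2))) with hσ0def
        have hσ0 : 0 < σ0 := div_pos (by linarith) (by linarith)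
        have hcmp := comp T' hT'1 hT'2 σ0 hσ0 s ⟨hs1, hsT'⟩ x
        have hmul : σ0 * Real.exp ((2*N*m*(w T')^(m-1) + 1) * (s - t0)) * (1 + ‖x‖^2)
            = (u s x - w s)/2 := by
          rw [hσ0def]
          field_simp
        rw [hmul] at hcmp
        linarith
    have hT1pos : 0 < T1 := lt_trans ht0 hT1t0
    have step2 : ∀ x, u T1 x = 0 := by
      intro x
      have hca : ContinuousAt (fun s => u s x) T1 := by
        have h1 : ContinuousAt (fun p : ℝ × EuclideanSpace ℝ (Fin N) => u p.1 p.2) (T1, x) :=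
          hu_cont.continuousAt (prod_mem_nhds (Ici_mem_nhds hT1pos) Filter.univ_mem)
        exact ContinuousAt.comp (f := fun s : ℝ => ((s, x) : ℝ × EuclideanSpace ℝ (Fin N))) h1
          ((continuous_id.prodMk continuous_const).continuousAt)
      haveI hne : (nhdsWithin T1 (Set.Ico t0 T1)).NeBot := by
        apply mem_closure_iff_nhdsWithin_neBot.mp
        rw [closure_Ico (ne_of_lt hT1t0)]
        exact ⟨hT1t0.le, le_refl T1⟩
      have h1 : Filter.Tendsto (fun s => u s x) (nhdsWithin T1 (Set.Ico t0 T1)) (nhds (u T1 x)) :=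
        hca.tendsto.mono_left nhdsWithin_le_nhds
      have h2 : Filter.Tendsto w (nhdsWithin T1 (Set.Ico t0 T1)) (nhds 0) := by
        have hbase_cont : Continuous (fun s : ℝ => (1-q)*(T1 - s)) := by fun_prop
        have hbc : Filter.Tendsto (fun s : ℝ => (1-q)*(T1 - s)) (nhds T1) (nhds 0) := by
          have h3 := hbase_cont.continuousAt (x := T1)
          rw [ContinuousAt] at h3
          simpa using h3
        have hrc : ContinuousAt (fun r : ℝ => r ^ (1/(1-q))) 0 :=
          Real.continuousAt_rpow_const 0 _ (Or.inr hαpos.le)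
        have h4 := hrc.tendsto.comp hbc
        rw [Real.zero_rpow (ne_of_gt hαpos)] at h4
        rw [hw]
        exact h4.mono_left nhdsWithin_le_nhds
      have hle0 : u T1 x ≤ 0 := by
        refine le_of_tendsto_of_tendsto h1 h2 ?_
        filter_upwards [self_mem_nhdsWithin] with s hs
        exact step1 s hs.1 hs.2 x
      exact le_antisymm hle0 (hu_nonneg T1 x)
    obtain ⟨x0, hx0⟩ := hTe_lt T1 (by linarith) hT1Te
    exact hx0 (step2 x0)
  refine ⟨(1-q) ^ (1/(1-q)), Real.rpow_pos_of_pos h1q _, ?_⟩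
  intro t ht htTe
  have hkey := key t ht htTe
  rwa [Real.mul_rpow h1q.le (by linarith : (0:ℝ) ≤ Te - t)] at hkey
end

section
/- Let N ≥ 1 and 0 < m < q < 1, set κ_* := (2m(m+q)/(q−m)²)^{1/(q−m)}, and for κ > 0 define Σ_κ : ℝ^N∖{0} → ℝ by Σ_κ(x) := κ|x|^{−2/(q−m)}. Then for every x ∈ ℝ^N with x ≠ 0, −Δ(Σ_κ^m)(x) + Σ_κ(x)^q ≥ κ^m (κ^{q−m} − κ_*^{q−m}) |x|^{−2q/(q−m)}. In particular, if κ ≥ κ_*, then −Δ(Σ_κ^m)(x) + Σ_κ(x)^q ≥ 0 for all x ≠ 0, i.e. Σ_κ is a (stationary) supersolution of ∂_t u = Δ(u^m) − u^q on ℝ^N∖{0}. -/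
open MeasureTheory Real Set

open RealInnerProductSpace

lemma aux_hfun {N : ℕ} (δ : ℝ) (y : EuclideanSpace ℝ (Fin N)) :
    ‖y‖ ^ δ = ⟪y, y⟫ ^ (δ / 2) := by
  rw [real_inner_self_eq_norm_sq, ← Real.rpow_natCast ‖y‖ 2,
    ← Real.rpow_mul (norm_nonneg y)]
  norm_num
  congr 1
  ring

lemma aux_fderiv1 {N : ℕ} (c δ : ℝ) {y : EuclideanSpace ℝ (Fin N)} (hy : y ≠ 0) (i : Fin N) :
    fderiv ℝ (fun z : EuclideanSpace ℝ (Fin N) => c * ⟪z, z⟫ ^ δ) y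
      (EuclideanSpace.single i 1) = c * δ * ⟪y, y⟫ ^ (δ - 1) * (2 * y i) := by
  have h0 : ⟪y, y⟫ ≠ (0:ℝ) := inner_self_ne_zero.mpr hy
  have h1 := (((hasFDerivAt_id y).inner ℝ (hasFDerivAt_id y)).rpow_const (p := δ)
    (Or.inl h0)).const_mul c
  simp only [id] at h1
  rw [h1.fderiv]
  simp [fderivInnerCLM_apply, EuclideanSpace.inner_single_left,
    EuclideanSpace.inner_single_right, real_inner_comm]
  ring

lemma aux_fderiv2 {N : ℕ} (C γ : ℝ) {x : EuclideanSpace ℝ (Fin N)} (hx : x ≠ 0) (i : Fin N) :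
    fderiv ℝ (fun y : EuclideanSpace ℝ (Fin N) => C * ⟪y, y⟫ ^ γ * (2 * y i)) x
      (EuclideanSpace.single i 1)
      = 2 * C * ⟪x, x⟫ ^ γ + 4 * C * γ * ⟪x, x⟫ ^ (γ - 1) * (x i) ^ 2 := by
  have h0 : ⟪x, x⟫ ≠ (0:ℝ) := inner_self_ne_zero.mpr hx
  have h1 := (((hasFDerivAt_id x).inner ℝ (hasFDerivAt_id x)).rpow_const (p := γ)
    (Or.inl h0)).const_mul C
  simp only [id] at h1
  have h2 : HasFDerivAt (fun y : EuclideanSpace ℝ (Fin N) => (2:ℝ) * y i)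
      ((2:ℝ) • (EuclideanSpace.proj i : EuclideanSpace ℝ (Fin N) →L[ℝ] ℝ)) x :=
    ((EuclideanSpace.proj i : EuclideanSpace ℝ (Fin N) →L[ℝ] ℝ).hasFDerivAt (x := x)).const_mul (2:ℝ)
  have h3 : HasFDerivAt (fun y : EuclideanSpace ℝ (Fin N) => C * ⟪y, y⟫ ^ γ * (2 * y i)) _ x :=
    h1.mul h2
  rw [h3.fderiv]
  simp [fderivInnerCLM_apply, EuclideanSpace.inner_single_left,
    EuclideanSpace.inner_single_right, real_inner_comm, EuclideanSpace.single_apply]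
  ring

lemma lapl_rpow {N : ℕ} (c α : ℝ) {x : EuclideanSpace ℝ (Fin N)} (hx : x ≠ 0) :
    lapl (fun y => c * ‖y‖ ^ α) x = c * α * (α + N - 2) * ‖x‖ ^ (α - 2) := by
  have h0 : ⟪x, x⟫ ≠ (0:ℝ) := inner_self_ne_zero.mpr hx
  have hfun : (fun y : EuclideanSpace ℝ (Fin N) => c * ‖y‖ ^ α)
      = fun y => c * ⟪y, y⟫ ^ (α / 2) := by
    funext y; rw [aux_hfun]
  rw [lapl, hfun]
  have hev : ∀ i : Fin N,
      fderiv ℝ (fun y => fderiv ℝ (fun z : EuclideanSpace ℝ (Fin N) => c * ⟪z, z⟫ ^ (α/2)) y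
          (EuclideanSpace.single i 1)) x (EuclideanSpace.single i 1)
      = 2 * (c * (α/2)) * ⟪x, x⟫ ^ (α/2 - 1)
        + 4 * (c * (α/2)) * (α/2 - 1) * ⟪x, x⟫ ^ (α/2 - 1 - 1) * (x i) ^ 2 := by
    intro i
    have heq : (fun y => fderiv ℝ (fun z : EuclideanSpace ℝ (Fin N) => c * ⟪z, z⟫ ^ (α/2)) y
          (EuclideanSpace.single i 1))
        =ᶠ[nhds x] (fun y => (c * (α/2)) * ⟪y, y⟫ ^ (α/2 - 1) * (2 * y i)) := by
      filter_upwards [eventually_ne_nhds hx] with y hy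
      rw [aux_fderiv1 c (α/2) hy i]
    rw [heq.fderiv_eq, aux_fderiv2 (c * (α/2)) (α/2 - 1) hx i]
  rw [Finset.sum_congr rfl fun i _ => hev i]
  rw [Finset.sum_add_distrib, Finset.sum_const, ← Finset.mul_sum]
  have hsum : ∑ i : Fin N, (x i) ^ 2 = ⟪x, x⟫ := by
    rw [PiLp.inner_apply]; simp [sq]
  rw [hsum]
  have hTpos : (0:ℝ) < ⟪x, x⟫ := lt_of_le_of_ne real_inner_self_nonneg (Ne.symm h0)
  have hstep : ⟪x, x⟫ ^ (α/2 - 1 - 1) * ⟪x, x⟫ = ⟪x, x⟫ ^ (α/2 - 1) := by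
    have h := Real.rpow_add hTpos (α/2 - 1 - 1) 1
    rw [Real.rpow_one] at h
    rw [← h]
    congr 1
    ring
  rw [aux_hfun (α - 2) x, show (α - 2) / 2 = α / 2 - 1 from by ring]
  simp only [Finset.card_univ, Fintype.card_fin, nsmul_eq_mul]
  linear_combination (4 * (c * (α/2)) * (α/2 - 1)) * hstep

/-- The profile $Σ_κ(x) = κ|x|^{-2/(q-m)}$ is a stationary supersolution for $κ ≥ κ_*$. -/
theorem stmt9 {N : ℕ} (hN : 1 ≤ N) (m q κ : ℝ)
    (hm : 0 < m) (hmq : m < q) (hq : q < 1) (hκ : 0 < κ) :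
    (∀ x : EuclideanSpace ℝ (Fin N), x ≠ 0 →
      κ ^ m * (κ ^ (q - m) -
          ((2 * m * (m + q) / (q - m) ^ 2) ^ (1 / (q - m))) ^ (q - m)) *
          ‖x‖ ^ (-2 * q / (q - m)) ≤
        -lapl (fun y => (κ * ‖y‖ ^ (-2 / (q - m))) ^ m) x +
          (κ * ‖x‖ ^ (-2 / (q - m))) ^ q) ∧
    ((2 * m * (m + q) / (q - m) ^ 2) ^ (1 / (q - m)) ≤ κ →
      ∀ x : EuclideanSpace ℝ (Fin N), x ≠ 0 →
        0 ≤ -lapl (fun y => (κ * ‖y‖ ^ (-2 / (q - m))) ^ m) x +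
          (κ * ‖x‖ ^ (-2 / (q - m))) ^ q) := by
  have hs : (0:ℝ) < q - m := sub_pos.mpr hmq
  have hs' : q - m ≠ 0 := hs.ne'
  have hA : (0:ℝ) ≤ 2 * m * (m + q) / (q - m) ^ 2 :=
    div_nonneg (by nlinarith) (by positivity)
  have hAeq : (((2 * m * (m + q) / (q - m) ^ 2) ^ (1 / (q - m))) : ℝ) ^ (q - m)
      = 2 * m * (m + q) / (q - m) ^ 2 := by
    rw [← Real.rpow_mul hA, one_div, inv_mul_cancel₀ hs', Real.rpow_one]
  have key : ∀ x : EuclideanSpace ℝ (Fin N), x ≠ 0 →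
      κ ^ m * (κ ^ (q - m) -
          ((2 * m * (m + q) / (q - m) ^ 2) ^ (1 / (q - m))) ^ (q - m)) *
          ‖x‖ ^ (-2 * q / (q - m)) ≤
        -lapl (fun y => (κ * ‖y‖ ^ (-2 / (q - m))) ^ m) x +
          (κ * ‖x‖ ^ (-2 / (q - m))) ^ q := by
    intro x hx
    have hxn : (0:ℝ) < ‖x‖ := norm_pos_iff.mpr hx
    set α : ℝ := -2 / (q - m) * m with hα
    have hfun : (fun y : EuclideanSpace ℝ (Fin N) => (κ * ‖y‖ ^ (-2 / (q - m))) ^ m)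
        = fun y => κ ^ m * ‖y‖ ^ α := by
      funext y
      rw [Real.mul_rpow hκ.le (Real.rpow_nonneg (norm_nonneg y) _),
        ← Real.rpow_mul (norm_nonneg y)]
    have hfq : (κ * ‖x‖ ^ (-2 / (q - m))) ^ q = κ ^ q * ‖x‖ ^ (-2 * q / (q - m)) := by
      rw [Real.mul_rpow hκ.le (Real.rpow_nonneg (norm_nonneg x) _),
        ← Real.rpow_mul (norm_nonneg x)]
      congr 1
      field_simp
    have hlap : lapl (fun y => (κ * ‖y‖ ^ (-2 / (q - m))) ^ m) x
        = κ ^ m * α * (α + N - 2) * ‖x‖ ^ (-2 * q / (q - m)) := by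
      rw [hfun, lapl_rpow (κ ^ m) α hx]
      congr 1
      rw [hα]; field_simp; ring
    rw [hlap, hfq, hAeq]
    have hκq : κ ^ q = κ ^ m * κ ^ (q - m) := by
      rw [← Real.rpow_add hκ]; congr 1; ring
    rw [hκq]
    have hR : (0:ℝ) < ‖x‖ ^ (-2 * q / (q - m)) := Real.rpow_pos_of_pos hxn _
    have hK : (0:ℝ) < κ ^ m := Real.rpow_pos_of_pos hκ _
    have hαneg : α ≤ 0 := by
      rw [hα]
      apply mul_nonpos_of_nonpos_of_nonneg _ hm.le
      apply div_nonpos_of_nonpos_of_nonneg (by norm_num) hs.le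
    have hN1 : (1:ℝ) ≤ (N:ℝ) := by exact_mod_cast hN
    have hmain : α * (α + N - 2) ≤ 2 * m * (m + q) / (q - m) ^ 2 := by
      have h2 : α * (α + N - 2) ≤ α ^ 2 - α := by
        nlinarith [mul_nonneg (neg_nonneg.mpr hαneg) (sub_nonneg.mpr hN1)]
      have h3 : α ^ 2 - α = 2 * m * (m + q) / (q - m) ^ 2 := by
        rw [hα]; field_simp; ring
      linarith
    nlinarith [mul_nonneg (mul_nonneg hK.le hR.le) (sub_nonneg.mpr hmain)]
  refine ⟨key, fun hle x hx => le_trans ?_ (key x hx)⟩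
  have h1 : ((2 * m * (m + q) / (q - m) ^ 2) ^ (1 / (q - m))) ^ (q - m) ≤ κ ^ (q - m) :=
    Real.rpow_le_rpow (Real.rpow_nonneg hA _) hle hs.le
  have hR : (0:ℝ) ≤ ‖x‖ ^ (-2 * q / (q - m)) := Real.rpow_nonneg (norm_nonneg x) _
  have hK : (0:ℝ) ≤ κ ^ m := Real.rpow_nonneg hκ.le _
  exact mul_nonneg (mul_nonneg hK (sub_nonneg.mpr h1)) hR
end

section
/- Let a > 1, b ≥ 0, c ∈ ℝ, C₀ ≥ 1, C₁ ≥ 1, and p₀ > 0 be such that p₀(a−1) + c > 0. Define the sequence (p_k)_{k≥0} by p_{k+1} = a p_k + c for k ≥ 0 (so each p_k is positive). If (Q_k)_{k≥0} is a sequence of positive real numbers satisfying Q₀ ≤ C₁^{p₀} and Q_{k+1} ≤ C₀ p_{k+1}^b · max{C₁^{p_{k+1}}, Q_k^a} for all k ≥ 0, then the sequence (Q_k^{1/p_k})_{k≥0} is bounded. -/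
open Real

set_option maxHeartbeats 1000000 in
/-- Moser-type iteration lemma (Lemma A.1 of [La94]). -/
theorem stmt13 (a b c C₀ C₁ : ℝ) (ha : 1 < a) (hb : 0 ≤ b)
    (hC₀ : 1 ≤ C₀) (hC₁ : 1 ≤ C₁)
    (p : ℕ → ℝ) (hp₀ : 0 < p 0) (hpc : p 0 * (a - 1) + c > 0)
    (hp : ∀ k, p (k + 1) = a * p k + c)
    (Q : ℕ → ℝ) (hQpos : ∀ k, 0 < Q k)
    (hQ₀ : Q 0 ≤ C₁ ^ p 0)
    (hQ : ∀ k, Q (k + 1) ≤ C₀ * p (k + 1) ^ b * max (C₁ ^ p (k + 1)) (Q k ^ a)) :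
    ∃ M : ℝ, ∀ k, Q k ^ (1 / p k) ≤ M := by
  have ha0 : (0:ℝ) < a := by linarith
  have ha1 : (0:ℝ) < a - 1 := by linarith
  have ha' : (1:ℝ) ≤ a := ha.le
  have hC₀0 : (0:ℝ) < C₀ := by linarith
  have hC₁0 : (0:ℝ) < C₁ := by linarith
  set δ : ℝ := c / (a - 1) with hδdef
  have hcδ : c = (a - 1) * δ := by
    rw [hδdef, mul_div_assoc', eq_div_iff ha1.ne']; ring
  have hp0δ : 0 < p 0 + δ := by nlinarith [hpc]
  have hform : ∀ k, p k + δ = a ^ k * (p 0 + δ) := by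
    intro k
    induction k with
    | zero => simp
    | succ n ih =>
      rw [hp n, pow_succ]
      nlinarith [ih]
  set m : ℝ := min (p 0) (p 0 + δ) with hmdef
  set M : ℝ := max 1 (p 0 + δ + |δ|) with hMdef
  have hm0 : 0 < m := lt_min hp₀ hp0δ
  have hM1 : (1:ℝ) ≤ M := le_max_left _ _
  have hMge : p 0 + δ + |δ| ≤ M := le_max_right _ _
  have hak : ∀ k : ℕ, (1:ℝ) ≤ a ^ k := fun k => one_le_pow₀ ha'
  have hlow : ∀ k, m * a ^ k ≤ p k := by
    intro k
    have h1 := hform k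
    have h2 := hak k
    have hm1 : m ≤ p 0 := min_le_left _ _
    have hm2 : m ≤ p 0 + δ := min_le_right _ _
    rcases le_or_gt 0 δ with hδ0 | hδ0
    · nlinarith [mul_le_mul_of_nonneg_right hm1 (by positivity : (0:ℝ) ≤ a ^ k)]
    · nlinarith [mul_le_mul_of_nonneg_right hm2 (by positivity : (0:ℝ) ≤ a ^ k)]
  have hpk : ∀ k, 0 < p k := fun k => lt_of_lt_of_le (by positivity) (hlow k)
  have hupp : ∀ k, p k ≤ M * a ^ k := by
    intro k
    have h1 := hform k
    have h2 := hak k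
    nlinarith [le_abs_self δ, neg_abs_le δ, hMge, hp0δ,
      mul_le_mul_of_nonneg_right hMge (by positivity : (0:ℝ) ≤ a ^ k)]
  set cp : ℝ := max c 0 with hcpdef
  have hcp0 : (0:ℝ) ≤ cp := le_max_right _ _
  have hlogC₀ : 0 ≤ Real.log C₀ := Real.log_nonneg hC₀
  have hlogC₁ : 0 ≤ Real.log C₁ := Real.log_nonneg hC₁
  have hlogM : 0 ≤ Real.log M := Real.log_nonneg hM1
  have hloga : 0 ≤ Real.log a := Real.log_nonneg ha'
  set A : ℝ := Real.log C₀ + b * Real.log M + cp * Real.log C₁ with hAdef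
  set B : ℝ := b * Real.log a with hBdef
  have hA0 : 0 ≤ A := by
    have := mul_nonneg hb hlogM
    have := mul_nonneg hcp0 hlogC₁
    simp only [hAdef]; linarith
  have hB0 : 0 ≤ B := mul_nonneg hb hloga
  set u : ℝ := B / (a - 1) with hudef
  set v : ℝ := (A + B + u) / (a - 1) with hvdef
  have hu0 : 0 ≤ u := div_nonneg hB0 ha1.le
  have hv0 : 0 ≤ v := div_nonneg (by linarith) ha1.le
  have huB : (a - 1) * u = B := by
    rw [hudef]; field_simp
  have hvA : (a - 1) * v = A + B + u := by
    rw [hvdef]; field_simp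
  set K : ℝ := p 0 * Real.log C₁ + v with hKdef
  have hK0 : 0 ≤ K := add_nonneg (mul_nonneg hp₀.le hlogC₁) hv0
  -- main induction
  have main : ∀ k, max (C₁ ^ p k) (Q k) ≤ Real.exp (K * a ^ k - (u * k + v)) := by
    intro k
    induction k with
    | zero =>
      simp only [pow_zero, Nat.cast_zero, mul_zero, zero_add, mul_one]
      have h0 : K - v = Real.log C₁ * p 0 := by rw [hKdef]; ring
      rw [h0, ← Real.rpow_def_of_pos hC₁0]
      exact max_le le_rfl hQ₀
    | succ n ih =>
      set R : ℝ := max (C₁ ^ p n) (Q n) with hR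
      set E : ℝ := K * a ^ n - (u * n + v) with hE
      have hRpos : 0 < R := lt_of_lt_of_le (hQpos n) (le_max_right _ _)
      have hCp : C₁ ^ p n ≤ R := le_max_left _ _
      have hQle : Q n ≤ R := le_max_right _ _
      have h1 : C₁ ^ p (n + 1) ≤ R ^ a * C₁ ^ cp := by
        have heq : C₁ ^ p (n + 1) = (C₁ ^ p n) ^ a * C₁ ^ c := by
          rw [hp n, Real.rpow_add hC₁0, mul_comm a (p n), Real.rpow_mul hC₁0.le]
        rw [heq]
        have h1a : (C₁ ^ p n) ^ a ≤ R ^ a :=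
          Real.rpow_le_rpow (Real.rpow_nonneg hC₁0.le _) hCp (by linarith)
        have h1b : C₁ ^ c ≤ C₁ ^ cp :=
          Real.rpow_le_rpow_of_exponent_le hC₁ (le_max_left _ _)
        exact mul_le_mul h1a h1b (Real.rpow_nonneg hC₁0.le _) (Real.rpow_nonneg hRpos.le _)
      have hcp1 : (1:ℝ) ≤ C₁ ^ cp := by
        have h := Real.rpow_le_rpow_of_exponent_le hC₁ hcp0
        simpa using h
      have h2 : Q n ^ a ≤ R ^ a * C₁ ^ cp := by
        have h2a : Q n ^ a ≤ R ^ a := Real.rpow_le_rpow (hQpos n).le hQle (by linarith)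
        nlinarith [Real.rpow_nonneg hRpos.le a]
      have hmax : max (C₁ ^ p (n+1)) (Q n ^ a) ≤ R ^ a * C₁ ^ cp := max_le h1 h2
      have hpn1 : 0 < p (n+1) := hpk (n+1)
      have hpb : p (n + 1) ^ b ≤ Real.exp (b * (Real.log M + (n+1) * Real.log a)) := by
        have hle : p (n+1) ≤ M * a ^ (n+1) := hupp (n+1)
        have hMA : (0:ℝ) < M * a ^ (n+1) := by positivity
        calc p (n+1) ^ b ≤ (M * a ^ (n+1)) ^ b :=
              Real.rpow_le_rpow hpn1.le hle hb
          _ = Real.exp (Real.log (M * a ^ (n+1)) * b) := Real.rpow_def_of_pos hMA b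
          _ = Real.exp (b * (Real.log M + (n+1) * Real.log a)) := by
              rw [Real.log_mul (by positivity) (by positivity), Real.log_pow]
              push_cast; ring_nf
      have hRa : R ^ a ≤ Real.exp (E * a) := by
        calc R ^ a ≤ (Real.exp E) ^ a := Real.rpow_le_rpow hRpos.le ih (by linarith)
          _ = Real.exp (E * a) := by rw [← Real.exp_mul]
      have hkey : R ^ a * C₁ ^ cp ≤ Real.exp (E * a + Real.log C₁ * cp) := by
        rw [Real.exp_add]
        exact mul_le_mul hRa (le_of_eq (Real.rpow_def_of_pos hC₁0 cp))
          (Real.rpow_nonneg hC₁0.le _) (Real.exp_nonneg _)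
      -- arithmetic: the exponent bound
      have hexp : Real.log C₀ + b * (Real.log M + (n+1) * Real.log a) + (E * a + Real.log C₁ * cp)
          = K * a ^ (n+1) - (u * (n+1) + v) := by
        rw [hE, pow_succ]
        have hAe : Real.log C₀ + b * Real.log M + cp * Real.log C₁ = A := hAdef.symm
        have hBe : b * Real.log a = B := hBdef.symm
        push_cast
        linear_combination (-(n:ℝ)) * huB - hvA + hAe + ((n:ℝ)+1) * hBe
      -- conclude for Q (n+1)
      have hQ1 : Q (n+1) ≤ Real.exp (K * a ^ (n+1) - (u * (n+1) + v)) := by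
        calc Q (n+1) ≤ C₀ * p (n+1) ^ b * max (C₁ ^ p (n+1)) (Q n ^ a) := hQ n
          _ ≤ C₀ * p (n+1) ^ b * (R ^ a * C₁ ^ cp) := by
              apply mul_le_mul_of_nonneg_left hmax
              positivity
          _ ≤ Real.exp (Real.log C₀) * Real.exp (b * (Real.log M + (n+1) * Real.log a)) *
              Real.exp (E * a + Real.log C₁ * cp) := by
              apply mul_le_mul _ hkey (by positivity) (by positivity)
              apply mul_le_mul (le_of_eq (Real.exp_log hC₀0).symm) hpb (by positivity)
                (Real.exp_nonneg _)
          _ = Real.exp (Real.log C₀ + b * (Real.log M + (n+1) * Real.log a) +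
              (E * a + Real.log C₁ * cp)) := by
              rw [← Real.exp_add, ← Real.exp_add]
          _ ≤ Real.exp (K * a ^ (n+1) - (u * (n+1) + v)) := Real.exp_le_exp.mpr hexp.le
      -- conclude for C₁ ^ p (n+1)
      have hC1' : C₁ ^ p (n+1) ≤ Real.exp (K * a ^ (n+1) - (u * (n+1) + v)) := by
        calc C₁ ^ p (n+1) ≤ R ^ a * C₁ ^ cp := h1
          _ ≤ Real.exp (E * a + Real.log C₁ * cp) := hkey
          _ ≤ Real.exp (K * a ^ (n+1) - (u * (n+1) + v)) := by
              apply Real.exp_le_exp.mpr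
              have hb1 : 0 ≤ b * (Real.log M + ((n:ℝ)+1) * Real.log a) := by positivity
              push_cast at hexp ⊢
              linarith [hexp.le]
      push_cast at hQ1 hC1' ⊢
      exact max_le hC1' hQ1
  -- conclusion
  refine ⟨Real.exp (K / m), fun k => ?_⟩
  have h1 : Q k ≤ Real.exp (K * a ^ k) := by
    refine le_trans (le_trans (le_max_right _ _) (main k)) (Real.exp_le_exp.mpr ?_)
    have : 0 ≤ u * k + v := by positivity
    linarith
  have hlogQ : Real.log (Q k) ≤ K * a ^ k := (Real.log_le_iff_le_exp (hQpos k)).mpr h1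
  rw [Real.rpow_def_of_pos (hQpos k)]
  apply Real.exp_le_exp.mpr
  rw [mul_one_div, div_le_div_iff₀ (hpk k) hm0]
  have ha2 : Real.log (Q k) * m ≤ K * a ^ k * m :=
    mul_le_mul_of_nonneg_right hlogQ hm0.le
  have ha3 : K * (m * a ^ k) ≤ K * p k := mul_le_mul_of_nonneg_left (hlow k) hK0
  nlinarith [ha2, ha3]
end

section
/- Let N ≥ 1 and let m, q satisfy (N−2)_+/N < m < q < 1 (so that 2q/(q−m) > N). Let K > 0 and let f : ℝ^N → [0,∞) be measurable and integrable with f(x) ≤ K|x|^{−2/(q−m)} for almost every x ∈ ℝ^N∖{0}. Then there exists a constant C > 0 depending only on N, m, q, and K such that ∫_{ℝ^N} f(x)^q dx ≤ C (∫_{ℝ^N} f(x) dx)^{(N(m−q)+2q)/(N(m−q)+2)}. -/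
open MeasureTheory Real Set

open scoped ENNReal

section Aux

lemma aux_holder {α : Type*} [MeasurableSpace α] (μ : Measure α) {p : ℝ} (hp0 : 0 < p)
    (hp1 : p < 1) {g : α → ℝ≥0∞} (hg : AEMeasurable g μ) :
    ∫⁻ x, g x ^ p ∂μ ≤ (∫⁻ x, g x ∂μ) ^ p * (μ univ) ^ (1 - p) := by
  have hpq : (1/p).HolderConjugate (1/(1-p)) := by
    rw [Real.holderConjugate_iff]
    constructor
    · rw [lt_div_iff₀ hp0]; linarith
    · rw [one_div, one_div, inv_inv, inv_inv]; ring
  have h := ENNReal.lintegral_mul_le_Lp_mul_Lq μ hpq (f := fun x => g x ^ p)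
    (g := fun _ => 1) (hg.pow_const p) aemeasurable_const
  have e1 : ∀ x, (g x ^ p) ^ (p⁻¹ : ℝ) = g x := fun x => by
    rw [← ENNReal.rpow_mul, mul_inv_cancel₀ hp0.ne', ENNReal.rpow_one]
  simpa [one_div, e1] using h

lemma aux_scale {N : ℕ} (α : ℝ) {R : ℝ} (hR : 0 < R) :
    ∫⁻ x : EuclideanSpace ℝ (Fin N) in {x | R ≤ ‖x‖}, ENNReal.ofReal (‖x‖ ^ (-α)) =
      ENNReal.ofReal (R ^ ((N : ℝ) - α)) *
        ∫⁻ y : EuclideanSpace ℝ (Fin N) in {y | 1 ≤ ‖y‖}, ENNReal.ofReal (‖y‖ ^ (-α)) := by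
  have hSR : MeasurableSet {x : EuclideanSpace ℝ (Fin N) | R ≤ ‖x‖} :=
    measurableSet_le measurable_const measurable_norm
  have hS1 : MeasurableSet {x : EuclideanSpace ℝ (Fin N) | 1 ≤ ‖x‖} :=
    measurableSet_le measurable_const measurable_norm
  set φ : EuclideanSpace ℝ (Fin N) → ℝ≥0∞ :=
    ({y : EuclideanSpace ℝ (Fin N) | 1 ≤ ‖y‖}).indicator
      (fun y => ENNReal.ofReal (‖y‖ ^ (-α))) with hφ
  have hφm : Measurable φ := by
    apply Measurable.indicator _ hS1
    fun_prop
  have key : ∀ x : EuclideanSpace ℝ (Fin N),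
      ({x : EuclideanSpace ℝ (Fin N) | R ≤ ‖x‖}).indicator
        (fun x => ENNReal.ofReal (‖x‖ ^ (-α))) x
        = ENNReal.ofReal (R ^ (-α)) * φ (R⁻¹ • x) := by
    intro x
    have hnorm : ‖R⁻¹ • x‖ = R⁻¹ * ‖x‖ := by
      rw [norm_smul, Real.norm_eq_abs, abs_of_pos (inv_pos.2 hR)]
    have hiff : (1:ℝ) ≤ ‖R⁻¹ • x‖ ↔ R ≤ ‖x‖ := by
      rw [hnorm, inv_mul_eq_div, one_le_div hR]
    by_cases hx : R ≤ ‖x‖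
    · rw [Set.indicator_of_mem (by exact hx), hφ, Set.indicator_of_mem (by exact hiff.2 hx)]
      rw [hnorm, ← ENNReal.ofReal_mul (Real.rpow_nonneg hR.le _)]
      congr 1
      rw [Real.mul_rpow (inv_nonneg.2 hR.le) (norm_nonneg _), Real.inv_rpow hR.le, ← mul_assoc,
        mul_inv_cancel₀ (Real.rpow_pos_of_pos hR (-α)).ne', one_mul]
    · rw [Set.indicator_of_notMem (by exact hx), hφ,
        Set.indicator_of_notMem (by exact fun h => hx (hiff.1 h)), mul_zero]
  rw [← lintegral_indicator hSR, ← lintegral_indicator hS1]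
  calc ∫⁻ x, ({x : EuclideanSpace ℝ (Fin N) | R ≤ ‖x‖}).indicator
        (fun x => ENNReal.ofReal (‖x‖ ^ (-α))) x
      = ∫⁻ x, ENNReal.ofReal (R ^ (-α)) * φ (R⁻¹ • x) := by
        exact lintegral_congr key
    _ = ENNReal.ofReal (R ^ (-α)) * ∫⁻ x, φ (R⁻¹ • x) :=
        lintegral_const_mul _ (hφm.comp (measurable_const_smul _))
    _ = ENNReal.ofReal (R ^ (-α)) * ∫⁻ y, φ y
          ∂(Measure.map (fun x : EuclideanSpace ℝ (Fin N) => R⁻¹ • x) volume) := by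
        rw [lintegral_map hφm (measurable_const_smul _)]
    _ = ENNReal.ofReal (R ^ ((N:ℝ) - α)) * ∫⁻ y, φ y := by
        rw [Measure.map_addHaar_smul volume (inv_ne_zero hR.ne'), lintegral_smul_measure, smul_eq_mul,
          finrank_euclideanSpace_fin]
        have h1 : ENNReal.ofReal |((R⁻¹ ^ N : ℝ))⁻¹| = ENNReal.ofReal (R ^ (N:ℝ)) := by
          rw [inv_pow, inv_inv, abs_of_pos (pow_pos hR N), Real.rpow_natCast]
        rw [h1, ← mul_assoc, ← ENNReal.ofReal_mul (Real.rpow_nonneg hR.le _),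
          ← Real.rpow_add hR, show -α + (N:ℝ) = (N:ℝ) - α by ring]

lemma aux_finite {N : ℕ} {α : ℝ} (hα : (N : ℝ) < α) :
    ∫⁻ y : EuclideanSpace ℝ (Fin N) in {y | 1 ≤ ‖y‖}, ENNReal.ofReal (‖y‖ ^ (-α)) < ⊤ := by
  have hα0 : 0 < α := lt_of_le_of_lt (Nat.cast_nonneg N) hα
  have hb : ∀ y : EuclideanSpace ℝ (Fin N), 1 ≤ ‖y‖ →
      ‖y‖ ^ (-α) ≤ 2 ^ α * (1 + ‖y‖) ^ (-α) := by
    intro y hy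
    have h2 : (1 + ‖y‖) / 2 ≤ ‖y‖ := by linarith
    have hpos : (0:ℝ) < (1 + ‖y‖) / 2 := by linarith
    calc ‖y‖ ^ (-α) ≤ ((1 + ‖y‖)/2) ^ (-α) :=
          Real.rpow_le_rpow_of_nonpos hpos h2 (neg_nonpos.2 hα0.le)
      _ = 2 ^ α * (1 + ‖y‖) ^ (-α) := by
          rw [Real.div_rpow (by linarith : (0:ℝ) ≤ 1 + ‖y‖) (by norm_num : (0:ℝ) ≤ 2),
            Real.rpow_neg (by norm_num : (0:ℝ) ≤ 2)]
          rw [div_eq_mul_inv, inv_inv, mul_comm]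
  calc ∫⁻ y : EuclideanSpace ℝ (Fin N) in {y | 1 ≤ ‖y‖}, ENNReal.ofReal (‖y‖ ^ (-α))
      ≤ ∫⁻ y : EuclideanSpace ℝ (Fin N) in {y | 1 ≤ ‖y‖},
          ENNReal.ofReal (2 ^ α * (1 + ‖y‖) ^ (-α)) := by
        apply setLIntegral_mono (by fun_prop)
        exact fun y hy => ENNReal.ofReal_le_ofReal (hb y hy)
    _ ≤ ∫⁻ y : EuclideanSpace ℝ (Fin N), ENNReal.ofReal (2 ^ α * (1 + ‖y‖) ^ (-α)) :=
        setLIntegral_le_lintegral _ _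
    _ = ENNReal.ofReal (2 ^ α) *
          ∫⁻ y : EuclideanSpace ℝ (Fin N), ENNReal.ofReal ((1 + ‖y‖) ^ (-α)) := by
        simp_rw [ENNReal.ofReal_mul (by positivity : (0:ℝ) ≤ (2:ℝ) ^ α)]
        exact lintegral_const_mul _ (by fun_prop)
    _ < ⊤ := by
        apply ENNReal.mul_lt_top ENNReal.ofReal_lt_top
        apply finite_integral_one_add_norm
        rwa [finrank_euclideanSpace_fin]

end Aux

/-- The bound `∫ f^q ≤ C (∫ f)^{(N(m-q)+2q)/(N(m-q)+2)}` for integrable `f` with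
algebraic decay `f(x) ≤ K|x|^{-2/(q-m)}`. -/
theorem stmt16 {N : ℕ} (hN : 1 ≤ N) (m q K : ℝ)
    (hm : max ((N : ℝ) - 2) 0 / N < m) (hmq : m < q) (hq : q < 1) (hK : 0 < K) :
    ∃ C : ℝ, 0 < C ∧ ∀ f : EuclideanSpace ℝ (Fin N) → ℝ,
      Measurable f → (∀ x, 0 ≤ f x) → Integrable f →
      (∀ᵐ x ∂(volume : Measure (EuclideanSpace ℝ (Fin N))),
        x ≠ 0 → f x ≤ K * ‖x‖ ^ (-2 / (q - m))) →
      ∫⁻ x, ENNReal.ofReal (f x ^ q) ≤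
        ENNReal.ofReal
          (C * (∫ x, f x) ^ (((N : ℝ) * (m - q) + 2 * q) / ((N : ℝ) * (m - q) + 2))) := by
  haveI : Nonempty (Fin N) := ⟨⟨0, hN⟩⟩
  haveI : Nontrivial (EuclideanSpace ℝ (Fin N)) := inferInstance
  have hN0 : (0:ℝ) < N := by exact_mod_cast hN
  have hNm : max ((N:ℝ) - 2) 0 < N * m := by rwa [div_lt_iff₀ hN0, mul_comm] at hm
  have hm0 : 0 < m := by
    have h0 : (0:ℝ) ≤ max ((N:ℝ)-2) 0 := le_max_right _ _
    nlinarith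
  have hq0 : 0 < q := hm0.trans hmq
  have hqm : 0 < q - m := by linarith
  have hA : 0 < (N:ℝ) * (m - q) + 2 := by
    nlinarith [mul_pos hN0 (by linarith : (0:ℝ) < 1 - q),
      (le_max_left ((N:ℝ)-2) 0).trans_lt hNm]
  have hB : 0 < (N:ℝ) * (m - q) + 2 * q := by
    rcases le_total ((N:ℝ)-2) 0 with h | h
    · have h1 : max ((N:ℝ)-2) 0 = 0 := max_eq_right h
      rw [h1] at hNm
      nlinarith [mul_nonneg (neg_nonneg.2 h) hq0.le]
    · have h1 : max ((N:ℝ)-2) 0 = (N:ℝ)-2 := max_eq_left h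
      rw [h1] at hNm
      nlinarith [mul_nonneg h (by linarith : (0:ℝ) ≤ 1 - q)]
  set A := (N:ℝ) * (m - q) + 2 with hAdef
  set B := (N:ℝ) * (m - q) + 2 * q with hBdef
  set θ := B / A with hθdef
  set α := 2 * q / (q - m) with hαdef
  have hαN : (N:ℝ) < α := by
    rw [hαdef, lt_div_iff₀ hqm]
    nlinarith
  set c₁ := ∫⁻ y : EuclideanSpace ℝ (Fin N) in {y | 1 ≤ ‖y‖}, ENNReal.ofReal (‖y‖ ^ (-α))
    with hc₁def
  have hc₁ : c₁ < ⊤ := aux_finite hαN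
  set v₁ := volume (Metric.ball (0 : EuclideanSpace ℝ (Fin N)) 1) with hv₁def
  have hv₁ : v₁ < ⊤ := measure_ball_lt_top
  set Cen : ℝ≥0∞ := v₁ ^ (1-q) + ENNReal.ofReal (K ^ q) * c₁ with hCendef
  have hCen : Cen ≠ ⊤ := by
    rw [hCendef]
    refine ENNReal.add_ne_top.2 ⟨?_, ?_⟩
    · exact (ENNReal.rpow_lt_top_of_nonneg (by linarith) hv₁.ne).ne
    · exact (ENNReal.mul_lt_top ENNReal.ofReal_lt_top hc₁).ne
  refine ⟨Cen.toReal + 1, by positivity, ?_⟩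
  intro f hf hf0 hfi hfb
  have hfq_meas : Measurable fun x : EuclideanSpace ℝ (Fin N) =>
      ENNReal.ofReal (f x ^ q) := by fun_prop
  set I := ∫ x, f x with hIdef
  have hI0 : 0 ≤ I := integral_nonneg hf0
  have hIJ : ENNReal.ofReal I = ∫⁻ x, ENNReal.ofReal (f x) :=
    ofReal_integral_eq_lintegral_ofReal hfi (Filter.Eventually.of_forall hf0)
  rcases eq_or_lt_of_le hI0 with hI | hI
  · have hf_zero : f =ᵐ[volume] 0 := (integral_eq_zero_iff_of_nonneg hf0 hfi).1 hI.symm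
    have hz : ∫⁻ x, ENNReal.ofReal (f x ^ q) = 0 := by
      rw [lintegral_eq_zero_iff hfq_meas]
      filter_upwards [hf_zero] with x hx
      have : f x = 0 := hx
      simp [this, Real.zero_rpow hq0.ne']
    rw [hz]
    exact zero_le
  · set s := (m - q) / A with hsdef
    set R := I ^ s with hRdef
    have hR : 0 < R := Real.rpow_pos_of_pos hI _
    have hball : MeasurableSet (Metric.ball (0 : EuclideanSpace ℝ (Fin N)) R) :=
      measurableSet_ball
    have hcompl : (Metric.ball (0 : EuclideanSpace ℝ (Fin N)) R)ᶜ
        = {x : EuclideanSpace ℝ (Fin N) | R ≤ ‖x‖} := by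
      ext x
      simp [Metric.mem_ball, dist_zero_right, not_lt]
    -- Term 1 : Hölder on the ball
    have hT1 : ∫⁻ x in Metric.ball (0 : EuclideanSpace ℝ (Fin N)) R, ENNReal.ofReal (f x ^ q)
        ≤ v₁ ^ (1-q) * ENNReal.ofReal (I ^ θ) := by
      have h1 : ∀ x : EuclideanSpace ℝ (Fin N),
          ENNReal.ofReal (f x ^ q) = (ENNReal.ofReal (f x)) ^ q := fun x =>
        (ENNReal.ofReal_rpow_of_nonneg (hf0 x) hq0.le).symm
      simp_rw [h1]
      calc ∫⁻ x in Metric.ball (0 : EuclideanSpace ℝ (Fin N)) R, (ENNReal.ofReal (f x)) ^ q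
          ≤ (∫⁻ x in Metric.ball (0 : EuclideanSpace ℝ (Fin N)) R, ENNReal.ofReal (f x)) ^ q *
              ((volume.restrict (Metric.ball (0 : EuclideanSpace ℝ (Fin N)) R)) univ) ^ (1-q) :=
            aux_holder _ hq0 hq (hf.ennreal_ofReal.aemeasurable)
        _ ≤ (ENNReal.ofReal I) ^ q * (ENNReal.ofReal (R ^ N) * v₁) ^ (1-q) := by
            apply mul_le_mul'
            · apply ENNReal.rpow_le_rpow _ hq0.le
              rw [hIJ]
              exact setLIntegral_le_lintegral _ _
            · apply ENNReal.rpow_le_rpow _ (by linarith : (0:ℝ) ≤ 1 - q)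
              refine le_of_eq ?_
              rw [Measure.restrict_apply_univ, hv₁def,
                Measure.addHaar_ball _ _ hR.le, finrank_euclideanSpace_fin]
        _ = v₁ ^ (1-q) * ENNReal.ofReal (I ^ θ) := by
            have h1q : (0:ℝ) ≤ 1 - q := by linarith
            have hRN : (R:ℝ) ^ (N:ℕ) = I ^ (s * N) := by
              rw [← Real.rpow_natCast R N, hRdef, ← Real.rpow_mul hI.le]
            have hreal : I ^ q * (I ^ (s * (N:ℝ))) ^ (1 - q) = I ^ θ := by
              rw [← Real.rpow_mul hI.le, ← Real.rpow_add hI]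
              congr 1
              have hA' : (N:ℝ) * (m - q) + 2 ≠ 0 := hA.ne'
              rw [hθdef, hsdef, hBdef, hAdef, eq_div_iff hA']
              have hX : (m - q) / ((N:ℝ) * (m - q) + 2) * ((N:ℝ) * (m - q) + 2) = m - q :=
                div_mul_cancel₀ _ hA'
              linear_combination ((N:ℝ) * (1 - q)) * hX
            rw [ENNReal.mul_rpow_of_nonneg _ _ h1q,
              ENNReal.ofReal_rpow_of_nonneg hI0 hq0.le,
              ENNReal.ofReal_rpow_of_nonneg (pow_nonneg hR.le N) h1q,
              hRN, ← mul_assoc, ← ENNReal.ofReal_mul (Real.rpow_nonneg hI0 q), hreal, mul_comm]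
    -- Term 2 : decay bound outside the ball
    have hT2 : ∫⁻ x in {x : EuclideanSpace ℝ (Fin N) | R ≤ ‖x‖}, ENNReal.ofReal (f x ^ q)
        ≤ ENNReal.ofReal (K ^ q) * c₁ * ENNReal.ofReal (I ^ θ) := by
      have hstep : ∫⁻ x in {x : EuclideanSpace ℝ (Fin N) | R ≤ ‖x‖}, ENNReal.ofReal (f x ^ q)
          ≤ ∫⁻ x in {x : EuclideanSpace ℝ (Fin N) | R ≤ ‖x‖},
              ENNReal.ofReal (K ^ q * ‖x‖ ^ (-α)) := by
        apply setLIntegral_mono_ae (by fun_prop)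
        filter_upwards [hfb] with x hx hxs
        have hx0 : x ≠ 0 := by
          intro h
          rw [h, norm_zero] at hxs
          exact absurd hxs (not_le.2 hR)
        have h2 : (K * ‖x‖ ^ (-2/(q-m))) ^ q = K ^ q * ‖x‖ ^ (-α) := by
          rw [Real.mul_rpow hK.le (Real.rpow_nonneg (norm_nonneg _) _),
            ← Real.rpow_mul (norm_nonneg _)]
          congr 1
          rw [hαdef]
          ring
        apply ENNReal.ofReal_le_ofReal
        rw [← h2]
        exact Real.rpow_le_rpow (hf0 x) (hx hx0) hq0.le
      calc ∫⁻ x in {x : EuclideanSpace ℝ (Fin N) | R ≤ ‖x‖}, ENNReal.ofReal (f x ^ q)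
          ≤ ∫⁻ x in {x : EuclideanSpace ℝ (Fin N) | R ≤ ‖x‖},
              ENNReal.ofReal (K ^ q * ‖x‖ ^ (-α)) := hstep
        _ = ENNReal.ofReal (K ^ q) *
              ∫⁻ x in {x : EuclideanSpace ℝ (Fin N) | R ≤ ‖x‖},
                ENNReal.ofReal (‖x‖ ^ (-α)) := by
            simp_rw [ENNReal.ofReal_mul (Real.rpow_nonneg hK.le q)]
            exact lintegral_const_mul _ (by fun_prop)
        _ = ENNReal.ofReal (K ^ q) * (ENNReal.ofReal (R ^ ((N:ℝ) - α)) * c₁) := by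
            rw [aux_scale α hR, hc₁def]
        _ = ENNReal.ofReal (K ^ q) * c₁ * ENNReal.ofReal (I ^ θ) := by
            have hRθ : R ^ ((N:ℝ) - α) = I ^ θ := by
              rw [hRdef, ← Real.rpow_mul hI.le]
              congr 1
              rw [hθdef, hsdef, hBdef, hAdef, hαdef]
              field_simp
              ring
            rw [hRθ]
            ring
    calc ∫⁻ x, ENNReal.ofReal (f x ^ q)
        = (∫⁻ x in Metric.ball (0 : EuclideanSpace ℝ (Fin N)) R, ENNReal.ofReal (f x ^ q)) +
            ∫⁻ x in {x : EuclideanSpace ℝ (Fin N) | R ≤ ‖x‖}, ENNReal.ofReal (f x ^ q) := by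
          rw [← hcompl, lintegral_add_compl _ hball]
      _ ≤ v₁ ^ (1-q) * ENNReal.ofReal (I ^ θ) +
            ENNReal.ofReal (K ^ q) * c₁ * ENNReal.ofReal (I ^ θ) := add_le_add hT1 hT2
      _ = Cen * ENNReal.ofReal (I ^ θ) := by rw [hCendef]; ring
      _ ≤ ENNReal.ofReal (Cen.toReal + 1) * ENNReal.ofReal (I ^ θ) := by
          gcongr
          calc Cen = ENNReal.ofReal Cen.toReal := (ENNReal.ofReal_toReal hCen).symm
            _ ≤ ENNReal.ofReal (Cen.toReal + 1) := ENNReal.ofReal_le_ofReal (by linarith)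
      _ = ENNReal.ofReal ((Cen.toReal + 1) * I ^ θ) := (ENNReal.ofReal_mul (by positivity)).symm
end
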